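/- Let n be a nonnegative integer and δ, γ real numbers with γ ≠ 0. Then for every twice continuously differentiable function y : ℝ → ℝ and every z ∈ ℝ, z(z² − 1)·y″(z) + (δ z² − 1/γ)·y′(z) − n(n−1+δ)·z·y(z) = −(J⁺J⁰y)(z) − (J⁰J⁻y)(z) − ((3n−2)/2 + δ)·(J⁺y)(z) − (1/γ + n/2)·(J⁻y)(z). -/

import Mathlib

/-- `(J⁺y)(x) = -x²y'(x) + n x y(x)` -/
noncomputable def Jp (n : ℕ) (y : ℝ → ℝ) : ℝ → ℝ :=
  fun x => -x ^ 2 * deriv y x + (n : ℝ) * x * y x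

/-- `(J⁰y)(x) = x y'(x) - (n/2) y(x)` -/
noncomputable def J0 (n : ℕ) (y : ℝ → ℝ) : ℝ → ℝ :=
  fun x => x * deriv y x - ((n : ℝ) / 2) * y x

/-- `(J⁻y)(x) = y'(x)` -/
noncomputable def Jm (y : ℝ → ℝ) : ℝ → ℝ := fun x => deriv y x

/-- sl(2) algebraization of the Stäckel-transformed Hamiltonian of two
Coulombically repelling electrons on a sphere:
`𝓗' = -J⁺J⁰ - J⁰J⁻ - ((3n-2)/2 + δ)J⁺ - (1/γ + n/2)J⁻`. -/
theorem electrons_on_sphere_sl2 (n : ℕ) (δ γ : ℝ) (hγ : γ ≠ 0)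
    (y : ℝ → ℝ) (hy : ContDiff ℝ 2 y) (z : ℝ) :
    z * (z ^ 2 - 1) * deriv (deriv y) z + (δ * z ^ 2 - 1 / γ) * deriv y z
      - (n : ℝ) * ((n : ℝ) - 1 + δ) * z * y z
    = -Jp n (J0 n y) z - J0 n (Jm y) z
      - ((3 * (n : ℝ) - 2) / 2 + δ) * Jp n y z
      - (1 / γ + (n : ℝ) / 2) * Jm y z := by
  have h1 : Differentiable ℝ y := hy.differentiable (by norm_num)
  have h2 : Differentiable ℝ (deriv y) :=
    (hy.iterate_deriv' 1 1).differentiable (by norm_num)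
  have hd0 : deriv (J0 n y) z
      = deriv y z + z * deriv (deriv y) z - ((n : ℝ) / 2) * deriv y z := by
    unfold J0
    rw [deriv_fun_sub (by fun_prop) (by fun_prop), deriv_fun_mul (by fun_prop) (h2 z),
      deriv_const_mul _ (h1 z)]
    simp
  have hJm : deriv (Jm y) z = deriv (deriv y) z := rfl
  simp only [Jp, J0, Jm, hd0, hJm]
  ring
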